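/- If the characteristic polynomial of an invertible linear map f : F_2^p → F_2^p is irreducible, then all nonzero orbits of f have the same length, namely the multiplicative order of a root of the characteristic polynomial in F_{2^p}. -/

import Mathlib

open Polynomial

/-- If the characteristic polynomial of an invertible linear map
`f : F_2^p → F_2^p` is irreducible, then all nonzero orbits of `f` have the same length,
namely the multiplicative order of a root of the characteristic polynomial in `F_{2^p}`
(realized as `AdjoinRoot P`). -/
theorem irreducible_charpoly_orbits_length (p : ℕ)
    (f : (Fin p → ZMod 2) ≃ₗ[ZMod 2] (Fin p → ZMod 2))
    (hirr : Irreducible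
      (LinearMap.charpoly (f : (Fin p → ZMod 2) →ₗ[ZMod 2] (Fin p → ZMod 2)))) :
    ∀ s : Fin p → ZMod 2, s ≠ 0 →
      Function.minimalPeriod (⇑f) s =
        orderOf (AdjoinRoot.root
          (LinearMap.charpoly (f : (Fin p → ZMod 2) →ₗ[ZMod 2] (Fin p → ZMod 2)))) := by
  intro s hs
  set F : (Fin p → ZMod 2) →ₗ[ZMod 2] (Fin p → ZMod 2) := ↑f with hF
  set P : Polynomial (ZMod 2) := LinearMap.charpoly F with hP
  have hPf : Polynomial.aeval F P = 0 := LinearMap.aeval_self_charpoly F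
  have hmonic : P.Monic := LinearMap.charpoly_monic F
  -- indexing: iterate vs powers of the linear map
  have hiter : ∀ n : ℕ, (⇑f)^[n] s = (F ^ n) s := by
    intro n
    induction n with
    | zero => simp
    | succ n ih =>
        rw [Function.iterate_succ_apply', ih, pow_succ', Module.End.mul_apply]
        rfl
  -- annihilator characterization
  have ann : ∀ q : Polynomial (ZMod 2), (Polynomial.aeval F q) s = 0 ↔ P ∣ q := by
    intro q
    constructor
    · intro h
      by_contra hdvd
      have hb : q %ₘ P ≠ 0 := fun h0 => hdvd ((Polynomial.modByMonic_eq_zero_iff_dvd hmonic).mp h0)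
      have hbs : (Polynomial.aeval F (q %ₘ P)) s = 0 := by
        have := Polynomial.modByMonic_add_div q P
        have h2 : (Polynomial.aeval F (q %ₘ P + P * (q /ₘ P))) s = 0 := by rw [this]; exact h
        simpa [map_add, map_mul, Module.End.mul_apply, hPf] using h2
      have hnd : ¬ P ∣ (q %ₘ P) := by
        intro hdvd'
        exact hb (Polynomial.eq_zero_of_dvd_of_degree_lt hdvd'
          (Polynomial.degree_modByMonic_lt q hmonic))
      obtain ⟨u, v, huv⟩ := hirr.coprime_iff_not_dvd.mpr hnd
      have : s = 0 := by
        have h1 : (Polynomial.aeval F (u * P + v * (q %ₘ P))) s = s := by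
          rw [huv]; simp
        simpa [map_add, map_mul, Module.End.mul_apply, hPf, hbs] using h1.symm
      exact hs this
    · rintro ⟨c, rfl⟩
      simp [map_mul, Module.End.mul_apply, hPf]
  -- key equivalence
  have key : ∀ n : ℕ, (⇑f)^[n] s = s ↔
      (AdjoinRoot.root P) ^ n = 1 := by
    intro n
    rw [hiter n]
    have h1 : (F ^ n) s = s ↔ (Polynomial.aeval F (X ^ n - 1 : Polynomial (ZMod 2))) s = 0 := by
      rw [map_sub, map_pow, Polynomial.aeval_X, map_one, LinearMap.sub_apply,
        Module.End.one_apply, sub_eq_zero]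
    rw [h1, ann (X ^ n - 1)]
    rw [← AdjoinRoot.mk_eq_zero]
    rw [map_sub, map_pow, AdjoinRoot.mk_X, map_one, sub_eq_zero]
  refine Nat.dvd_antisymm ?_ ?_
  · exact Function.IsPeriodicPt.minimalPeriod_dvd
      ((key (orderOf (AdjoinRoot.root P))).mpr (pow_orderOf_eq_one _))
  · exact orderOf_dvd_of_pow_eq_one
      ((key (Function.minimalPeriod (⇑f) s)).mp (Function.iterate_minimalPeriod))
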